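/- For any weight matrix P ∈ ℝ_{>0}^{m×n} and any ε > 0, there exist α ∈ ℝ and a parameter vector w ∈ ℝ_{>0}^m such that ℓ_i(P,α,w) ≥ (1−ε)·ℓ^SNT(P) for every agent i ∈ [m]. -/

import Mathlib

open Finset

/-- EP-allocation with exponent `α`: fraction of item `j` assigned to agent `i`. -/
noncomputable def epAlloc {m n : ℕ} (P : Fin m → Fin n → ℝ) (α : ℝ) (w : Fin m → ℝ)
    (i : Fin m) (j : Fin n) : ℝ :=
  P i j ^ α * w i / ∑ i', P i' j ^ α * w i'

/-- Load of agent `i` under the EP-allocation with exponent `α`. -/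
noncomputable def epLoad {m n : ℕ} (P : Fin m → Fin n → ℝ) (α : ℝ) (w : Fin m → ℝ)
    (i : Fin m) : ℝ :=
  ∑ j, epAlloc P α w i j * P i j

/-- A feasible (fractional) assignment: entries in `[0,1]`, each item fully allocated. -/
def Feasible {m n : ℕ} (X : Fin m → Fin n → ℝ) : Prop :=
  (∀ i j, 0 ≤ X i j ∧ X i j ≤ 1) ∧ ∀ j, ∑ i, X i j = 1

/-- Load of agent `i` under the assignment `X`. -/
noncomputable def loadX {m n : ℕ} (P X : Fin m → Fin n → ℝ) (i : Fin m) : ℝ :=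
  ∑ j, X i j * P i j

/-- Optimal makespan (MinMax objective). -/
noncomputable def MKS {m n : ℕ} (P : Fin m → Fin n → ℝ) : ℝ :=
  sInf { t | ∃ X, Feasible X ∧ t = ⨆ i, loadX P X i }

/-- Optimal Santa Claus value (MaxMin objective). -/
noncomputable def SNT {m n : ℕ} (P : Fin m → Fin n → ℝ) : ℝ :=
  sSup { t | ∃ X, Feasible X ∧ t = ⨅ i, loadX P X i }


namespace EPwork
open Real

variable {m n : ℕ}

/-- `D j = ∑ i, (P i j * c i)^α`. -/
noncomputable def Dj (P : Fin m → Fin n → ℝ) (α : ℝ) (c : Fin m → ℝ) (j : Fin n) : ℝ :=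
  ∑ i, (P i j * c i) ^ α

/-- `Φ(c) = ∑ j, (D j)^(1/α)`. -/
noncomputable def Phi (P : Fin m → Fin n → ℝ) (α : ℝ) (c : Fin m → ℝ) : ℝ :=
  ∑ j, (Dj P α c j) ^ (1/α)

/-- `G i = ∂Φ/∂c_i`. -/
noncomputable def Gi (P : Fin m → Fin n → ℝ) (α : ℝ) (c : Fin m → ℝ) (i : Fin m) : ℝ :=
  ∑ j, (Dj P α c j) ^ (1/α - 1) * ((P i j * c i) ^ (α - 1) * P i j)

lemma exists_pos_coord {c : Fin m → ℝ} (hc : c ∈ stdSimplex ℝ (Fin m)) :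
    ∃ i, 0 < c i := by
  by_contra h
  push_neg at h
  have : ∑ i, c i = 0 := le_antisymm (Finset.sum_nonpos fun i _ => h i)
    (Finset.sum_nonneg fun i _ => hc.1 i)
  rw [hc.2] at this; norm_num at this

lemma Dj_pos {P : Fin m → Fin n → ℝ} (hP : ∀ i j, 0 < P i j) {α : ℝ} (hα : 0 < α)
    {c : Fin m → ℝ} (hc : c ∈ stdSimplex ℝ (Fin m)) (j : Fin n) : 0 < Dj P α c j := by
  obtain ⟨i, hi⟩ := exists_pos_coord hc
  refine Finset.sum_pos' (fun k _ => rpow_nonneg (mul_nonneg (hP k j).le (hc.1 k)) α)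
    ⟨i, Finset.mem_univ i, rpow_pos_of_pos (mul_pos (hP i j) hi) α⟩

lemma Phi_pos {P : Fin m → Fin n → ℝ} (hP : ∀ i j, 0 < P i j) {α : ℝ} (hα : 0 < α)
    (hn : 0 < n) {c : Fin m → ℝ} (hc : c ∈ stdSimplex ℝ (Fin m)) : 0 < Phi P α c := by
  refine Finset.sum_pos (fun j _ => rpow_pos_of_pos (Dj_pos hP hα hc j) _) ?_
  exact ⟨⟨0, hn⟩, Finset.mem_univ _⟩

lemma Phi_continuous (P : Fin m → Fin n → ℝ) {α : ℝ} (hα : 0 < α) :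
    Continuous (Phi P α) := by
  refine continuous_finset_sum _ fun j _ => ?_
  have hD : Continuous (fun c => Dj P α c j) := by
    refine continuous_finset_sum _ fun i _ => ?_
    have h1 : Continuous (fun c : Fin m → ℝ => P i j * c i) :=
      continuous_const.mul (continuous_apply i)
    have h2 : Continuous (fun x : ℝ => x ^ α) :=
      continuous_iff_continuousAt.2 fun x => Real.continuousAt_rpow_const x α (Or.inr hα.le)
    exact h2.comp h1
  have h2 : Continuous (fun x : ℝ => x ^ (1/α)) :=
    continuous_iff_continuousAt.2 fun x =>
      Real.continuousAt_rpow_const x _ (Or.inr (by positivity))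
  exact h2.comp hD

lemma euler {P : Fin m → Fin n → ℝ} (hP : ∀ i j, 0 < P i j) {α : ℝ} (hα : 0 < α)
    {c : Fin m → ℝ} (hc : c ∈ stdSimplex ℝ (Fin m)) :
    ∑ i, c i * Gi P α c i = Phi P α c := by
  have key : ∀ j, ∑ i, c i * ((Dj P α c j) ^ (1/α - 1) * ((P i j * c i) ^ (α - 1) * P i j))
      = (Dj P α c j) ^ (1/α) := by
    intro j
    have hD := Dj_pos hP hα hc j
    have h1 : ∀ i, c i * ((Dj P α c j) ^ (1/α - 1) * ((P i j * c i) ^ (α - 1) * P i j))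
        = (Dj P α c j) ^ (1/α - 1) * (P i j * c i) ^ α := by
      intro i
      rcases eq_or_lt_of_le (hc.1 i) with h0 | h0
      · rw [← h0]; simp [Real.zero_rpow (ne_of_gt hα)]
      · have hx : (0:ℝ) < P i j * c i := mul_pos (hP i j) h0
        have : (P i j * c i) ^ (α - 1) * (P i j * c i) = (P i j * c i) ^ α := by
          rw [← Real.rpow_add_one (ne_of_gt hx)]; ring_nf
        rw [← this]; ring
    rw [Finset.sum_congr rfl fun i _ => h1 i, ← Finset.mul_sum]
    have : ∑ i, (P i j * c i) ^ α = Dj P α c j := rfl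
    rw [this, ← Real.rpow_add_one (ne_of_gt hD)]
    ring_nf
  unfold Gi Phi
  rw [← Finset.sum_congr rfl fun j _ => key j]
  rw [Finset.sum_comm]
  exact Finset.sum_congr rfl fun j _ => by rw [Finset.mul_sum]

lemma hasDerivAt_phi {P : Fin m → Fin n → ℝ} {α : ℝ} (hα : 1 ≤ α)
    {c : Fin m → ℝ} (v : Fin m → ℝ) (hD : ∀ j, 0 < Dj P α c j) :
    HasDerivAt (fun s => Phi P α (fun i => c i + s * v i))
      (∑ i, v i * Gi P α c i) 0 := by
  have hα0 : (0:ℝ) < α := lt_of_lt_of_le one_pos hα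
  have hinner : ∀ j, HasDerivAt (fun s => Dj P α (fun i => c i + s * v i) j)
      (∑ i, α * (P i j * c i) ^ (α - 1) * (P i j * v i)) 0 := by
    intro j
    refine HasDerivAt.fun_sum fun i _ => ?_
    have h1 : HasDerivAt (fun s : ℝ => P i j * (c i + s * v i)) (P i j * v i) 0 := by
      have : HasDerivAt (fun s : ℝ => c i + s * v i) (v i) 0 := by
        simpa using ((hasDerivAt_id (0:ℝ)).mul_const (v i)).const_add (c i)
      simpa using this.const_mul (P i j)
    have h2 := (Real.hasDerivAt_rpow_const (x := P i j * (c i + 0 * v i)) (p := α)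
      (Or.inr hα)).comp 0 h1
    simpa [Function.comp_def, mul_comm, mul_assoc, mul_left_comm] using h2
  have houter : ∀ j, HasDerivAt (fun s => (Dj P α (fun i => c i + s * v i) j) ^ (1/α))
      ((1/α) * (Dj P α c j) ^ (1/α - 1) *
        (∑ i, α * (P i j * c i) ^ (α - 1) * (P i j * v i))) 0 := by
    intro j
    have hDj : Dj P α (fun i => c i + (0:ℝ) * v i) j ≠ 0 := by
      simpa using (hD j).ne'
    have h2 := (Real.hasDerivAt_rpow_const (x := Dj P α (fun i => c i + 0 * v i) j)
      (p := 1/α) (Or.inl hDj)).comp 0 (hinner j)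
    simpa [Function.comp_def, mul_comm, mul_assoc, mul_left_comm] using h2
  have hsum : HasDerivAt (fun s => Phi P α (fun i => c i + s * v i))
      (∑ j, (1/α) * (Dj P α c j) ^ (1/α - 1) *
        (∑ i, α * (P i j * c i) ^ (α - 1) * (P i j * v i))) 0 :=
    HasDerivAt.fun_sum (u := Finset.univ) (fun j _ => houter j)
  have heq : (∑ j, (1/α) * (Dj P α c j) ^ (1/α - 1) *
        (∑ i, α * (P i j * c i) ^ (α - 1) * (P i j * v i)))
      = ∑ i, v i * Gi P α c i := by
    have h1 : ∀ j, (1/α) * (Dj P α c j) ^ (1/α - 1) *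
        (∑ i, α * (P i j * c i) ^ (α - 1) * (P i j * v i))
        = ∑ i, v i * ((Dj P α c j) ^ (1/α - 1) * ((P i j * c i) ^ (α - 1) * P i j)) := by
      intro j
      rw [Finset.mul_sum]
      refine Finset.sum_congr rfl fun i _ => ?_
      field_simp
    rw [Finset.sum_congr rfl fun j _ => h1 j, Finset.sum_comm]
    exact Finset.sum_congr rfl fun i _ => by rw [Gi, Finset.mul_sum]
  rw [← heq]
  exact hsum

lemma feasible_uniform (hm : 0 < m) : Feasible (fun (_ : Fin m) (_ : Fin n) => (m:ℝ)⁻¹) := by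
  have hm' : (0:ℝ) < m := by exact_mod_cast hm
  constructor
  · intro i j
    constructor
    · positivity
    · rw [inv_le_one_iff₀]; right; exact_mod_cast hm
  · intro j
    simp [Finset.card_univ]
    field_simp

lemma snt_set_nonempty (hm : 0 < m) (P : Fin m → Fin n → ℝ) :
    Set.Nonempty { t | ∃ X, Feasible X ∧ t = ⨅ i, loadX P X i } :=
  ⟨_, ⟨_, feasible_uniform hm, rfl⟩⟩

lemma snt_le_phi (hm : 0 < m) {P : Fin m → Fin n → ℝ} (hP : ∀ i j, 0 < P i j)
    {α : ℝ} (hα : 0 < α) {c : Fin m → ℝ} (hc : c ∈ stdSimplex ℝ (Fin m)) :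
    SNT P ≤ Phi P α c := by
  haveI : Nonempty (Fin m) := ⟨⟨0, hm⟩⟩
  refine csSup_le (snt_set_nonempty hm P) ?_
  rintro t ⟨X, hX, rfl⟩
  have hle : ∀ i, (⨅ i', loadX P X i') ≤ loadX P X i := fun i =>
    ciInf_le (Finite.bddBelow_range _) i
  calc (⨅ i', loadX P X i') = ∑ i, c i * (⨅ i', loadX P X i') := by
        rw [← Finset.sum_mul, hc.2, one_mul]
    _ ≤ ∑ i, c i * loadX P X i :=
        Finset.sum_le_sum fun i _ => mul_le_mul_of_nonneg_left (hle i) (hc.1 i)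
    _ = ∑ j, ∑ i, X i j * (P i j * c i) := by
        rw [Finset.sum_comm]
        refine Finset.sum_congr rfl fun i _ => ?_
        rw [loadX, Finset.mul_sum]
        exact Finset.sum_congr rfl fun j _ => by ring
    _ ≤ ∑ j, (Dj P α c j) ^ (1/α) := by
        refine Finset.sum_le_sum fun j _ => ?_
        have hPc : ∀ i, P i j * c i ≤ (Dj P α c j) ^ (1/α) := by
          intro i
          have h1 : (P i j * c i) ^ α ≤ Dj P α c j :=
            Finset.single_le_sum (f := fun k => (P k j * c k) ^ α)
              (fun k _ => rpow_nonneg (mul_nonneg (hP k j).le (hc.1 k)) α)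
              (Finset.mem_univ i)
          have h2 : ((P i j * c i) ^ α) ^ (1/α) ≤ (Dj P α c j) ^ (1/α) :=
            rpow_le_rpow (rpow_nonneg (mul_nonneg (hP i j).le (hc.1 i)) α) h1
              (by positivity)
          rwa [← Real.rpow_mul (mul_nonneg (hP i j).le (hc.1 i)),
            mul_one_div_cancel (ne_of_gt hα), Real.rpow_one] at h2
        calc ∑ i, X i j * (P i j * c i) ≤ ∑ i, X i j * (Dj P α c j) ^ (1/α) :=
              Finset.sum_le_sum fun i _ =>
                mul_le_mul_of_nonneg_left (hPc i) (hX.1 i j).1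
          _ = (Dj P α c j) ^ (1/α) := by rw [← Finset.sum_mul, hX.2 j, one_mul]
    _ = Phi P α c := rfl

lemma sum_v (i k : Fin m) (hik : i ≠ k) :
    ∑ t, ((if t = i then (1:ℝ) else 0) - (if t = k then 1 else 0)) = 0 := by
  rw [Finset.sum_sub_distrib]
  simp

lemma sum_v_mul (i k : Fin m) (G : Fin m → ℝ) :
    ∑ t, ((if t = i then (1:ℝ) else 0) - (if t = k then 1 else 0)) * G t = G i - G k := by
  rw [Finset.sum_congr rfl (fun t _ => sub_mul ((if t = i then (1:ℝ) else 0)) _ (G t)),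
    Finset.sum_sub_distrib]
  congr 1 <;> simp [ite_mul]

lemma exists_critical (hm : 0 < m) (hn : 0 < n) {P : Fin m → Fin n → ℝ}
    (hP : ∀ i j, 0 < P i j) {α : ℝ} (hα : 1 < α) :
    ∃ c ∈ stdSimplex ℝ (Fin m), (∀ i, 0 < c i) ∧ (∀ i, Gi P α c i = Phi P α c) := by
  have hα0 : (0:ℝ) < α := lt_trans one_pos hα
  haveI : Nonempty (Fin m) := ⟨⟨0, hm⟩⟩
  -- minimizer exists
  have hm' : (0:ℝ) < m := by exact_mod_cast hm
  have hc0 : (fun _ : Fin m => (m:ℝ)⁻¹) ∈ stdSimplex ℝ (Fin m) := by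
    constructor
    · intro i; positivity
    · simp [Finset.card_univ]; field_simp
  obtain ⟨c, hcS, hmin⟩ := (isCompact_stdSimplex ℝ (Fin m)).exists_isMinOn
    ⟨_, hc0⟩ (Phi_continuous P hα0).continuousOn
  -- derivative along directions e_i - e_k
  have hderiv : ∀ i k : Fin m,
      HasDerivAt (fun s => Phi P α (fun t => c t + s *
        ((if t = i then (1:ℝ) else 0) - (if t = k then 1 else 0))))
        (Gi P α c i - Gi P α c k) 0 := by
    intro i k
    have := hasDerivAt_phi (le_of_lt hα)
      (fun t => (if t = i then (1:ℝ) else 0) - (if t = k then 1 else 0))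
      (fun j => Dj_pos hP hα0 hcS j)
    rwa [sum_v_mul] at this
  -- membership of perturbed points
  have hmem : ∀ i k : Fin m, i ≠ k → ∀ s : ℝ, 0 ≤ c i + s → s ≤ c k →
      (fun t => c t + s * ((if t = i then (1:ℝ) else 0) - (if t = k then 1 else 0)))
        ∈ stdSimplex ℝ (Fin m) := by
    intro i k hik s hs1 hs2
    constructor
    · intro t
      by_cases hti : t = i
      · subst hti; simp [if_neg hik]; linarith
      · by_cases htk : t = k
        · subst htk; simp [hti]; linarith [hcS.1 t]
        · simp [hti, htk]; exact hcS.1 t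
    · rw [Finset.sum_add_distrib, hcS.2, ← Finset.mul_sum, sum_v i k hik]
      ring
  -- positivity of coordinates
  have hpos : ∀ i, 0 < c i := by
    intro i
    rcases lt_or_eq_of_le (hcS.1 i) with h | h
    · exact h
    by_contra _
    obtain ⟨k, hk⟩ := exists_pos_coord hcS
    have hik : i ≠ k := by rintro rfl; rw [← h] at hk; exact lt_irrefl _ hk
    have hGi : Gi P α c i = 0 := by
      rw [Gi]
      refine Finset.sum_eq_zero fun j _ => ?_
      rw [← h, mul_zero, Real.zero_rpow (by linarith), zero_mul, mul_zero]
    have hGk : 0 < Gi P α c k := by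
      refine Finset.sum_pos (fun j _ => ?_) ⟨⟨0, hn⟩, Finset.mem_univ _⟩
      have h1 : (0:ℝ) < (Dj P α c j) ^ (1/α - 1) :=
        rpow_pos_of_pos (Dj_pos hP hα0 hcS j) _
      have h2 : (0:ℝ) < (P k j * c k) ^ (α - 1) :=
        rpow_pos_of_pos (mul_pos (hP k j) hk) _
      exact mul_pos h1 (mul_pos h2 (hP k j))
    set φ := fun s => Phi P α (fun t => c t + s *
        ((if t = i then (1:ℝ) else 0) - (if t = k then 1 else 0))) with hφ
    have hφ0 : φ 0 = Phi P α c := by simp [hφ]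
    have hslope : Filter.Tendsto (slope φ 0) (nhdsWithin 0 (Set.Ioi 0))
        (nhds (Gi P α c i - Gi P α c k)) :=
      (hasDerivAt_iff_tendsto_slope.1 (hderiv i k)).mono_left
        (nhdsWithin_mono 0 (fun x hx => Set.mem_compl_singleton_iff.2 (ne_of_gt hx)))
    have hev : ∀ᶠ s in nhdsWithin 0 (Set.Ioi 0), 0 ≤ slope φ 0 s := by
      filter_upwards [Ioo_mem_nhdsGT_of_mem (Set.left_mem_Ico.2 hk)] with s hs
      have hsmem := hmem i k hik s (by rw [← h]; simpa using hs.1.le) hs.2.le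
      have hge : φ 0 ≤ φ s := by rw [hφ0]; exact hmin hsmem
      rw [slope_def_field]
      have : 0 < s - 0 := by simpa using hs.1
      exact div_nonneg (by linarith) (by linarith)
    have h0le : (0:ℝ) ≤ Gi P α c i - Gi P α c k := ge_of_tendsto hslope hev
    rw [hGi] at h0le
    linarith
  -- first-order conditions
  have hfoc : ∀ i k : Fin m, Gi P α c i = Gi P α c k := by
    intro i k
    by_cases hik : i = k
    · rw [hik]
    set φ := fun s => Phi P α (fun t => c t + s *
        ((if t = i then (1:ℝ) else 0) - (if t = k then 1 else 0))) with hφ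
    have hφ0 : φ 0 = Phi P α c := by simp [hφ]
    have hloc : IsLocalMin φ 0 := by
      have hnb : Set.Ioo (-(c i)) (c k) ∈ nhds (0:ℝ) :=
        Ioo_mem_nhds (neg_lt_zero.2 (hpos i)) (hpos k)
      filter_upwards [hnb] with s hs
      have hsmem := hmem i k hik s (by linarith [hs.1]) hs.2.le
      rw [hφ0]; exact hmin hsmem
    have := hloc.hasDerivAt_eq_zero (hderiv i k)
    linarith [this]
  refine ⟨c, hcS, hpos, fun i => ?_⟩
  have := euler hP hα0 hcS
  calc Gi P α c i = ∑ t, c t * Gi P α c i := by rw [← Finset.sum_mul, hcS.2, one_mul]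
    _ = ∑ t, c t * Gi P α c t := Finset.sum_congr rfl fun t _ => by rw [hfoc i t]
    _ = Phi P α c := this

lemma coord_lower_bound (hm : 0 < m) (hn : 0 < n) {P : Fin m → Fin n → ℝ}
    (hP : ∀ i j, 0 < P i j) {α : ℝ} (hα : 1 < α) {b B : ℝ} (hb : 0 < b) (hB : 0 < B)
    (hbP : ∀ i j, b ≤ P i j) (hPB : ∀ i j, P i j ≤ B)
    {c : Fin m → ℝ} (hc : c ∈ stdSimplex ℝ (Fin m)) (hpos : ∀ i, 0 < c i)
    (hcrit : ∀ i, Gi P α c i = Phi P α c) (i : Fin m) :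
    (b / (m * B * n)) ^ (α / (α - 1)) ≤ c i := by
  have hα0 : (0:ℝ) < α := lt_trans one_pos hα
  have hm' : (0:ℝ) < m := by exact_mod_cast hm
  have hn' : (0:ℝ) < n := by exact_mod_cast hn
  have hbm : (0:ℝ) < b / m := div_pos hb hm'
  set q : ℝ := b / (m * B * n) with hq
  have hq0 : 0 < q := div_pos hb (mul_pos (mul_pos hm' hB) hn')
  have hk : ∃ k, (m:ℝ)⁻¹ ≤ c k := by
    by_contra hcon
    push_neg at hcon
    have h2 : ∑ t, c t < ∑ _t : Fin m, (m:ℝ)⁻¹ :=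
      Finset.sum_lt_sum_of_nonempty ⟨⟨0, hm⟩, Finset.mem_univ _⟩ fun t _ => hcon t
    rw [hc.2] at h2
    simp [Finset.card_univ] at h2
    rw [mul_inv_cancel₀ (ne_of_gt hm')] at h2
    exact lt_irrefl _ h2
  obtain ⟨k, hk⟩ := hk
  have hDlow : ∀ j, (b / m) ^ α ≤ Dj P α c j := by
    intro j
    have h1 : b / m ≤ P k j * c k := by
      calc b / m = b * (m:ℝ)⁻¹ := div_eq_mul_inv b _
        _ ≤ P k j * c k := mul_le_mul (hbP k j) hk (by positivity) (hP k j).le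
    calc (b / m) ^ α ≤ (P k j * c k) ^ α := rpow_le_rpow hbm.le h1 hα0.le
      _ ≤ Dj P α c j := Finset.single_le_sum (f := fun t => (P t j * c t) ^ α)
          (fun t _ => rpow_nonneg (mul_nonneg (hP t j).le (hc.1 t)) α) (Finset.mem_univ k)
  have hPhiLow : b / m ≤ Phi P α c := by
    have h1 : (b / m) ≤ (Dj P α c ⟨0, hn⟩) ^ (1/α) := by
      have h2 := rpow_le_rpow (rpow_nonneg hbm.le α) (hDlow ⟨0, hn⟩)
        (by positivity : (0:ℝ) ≤ 1/α)
      rwa [← Real.rpow_mul hbm.le, mul_one_div_cancel (ne_of_gt hα0), Real.rpow_one] at h2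
    calc b / m ≤ (Dj P α c ⟨0, hn⟩) ^ (1/α) := h1
      _ ≤ Phi P α c := Finset.single_le_sum (f := fun j => (Dj P α c j) ^ (1/α))
          (fun j _ => rpow_nonneg (Dj_pos hP hα0 hc j).le _) (Finset.mem_univ _)
  have hterm : ∀ j, (Dj P α c j) ^ (1/α - 1) * ((P i j * c i) ^ (α - 1) * P i j)
      ≤ (b/m) ^ (1-α) * (B ^ α * c i ^ (α-1)) := by
    intro j
    have h1 : (Dj P α c j) ^ (1/α - 1) ≤ (b/m) ^ (1-α) := by
      have e1 : ((b/m) ^ α) ^ (1/α - 1) = (b/m) ^ (1-α) := by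
        rw [← Real.rpow_mul hbm.le]
        congr 1
        field_simp
      calc (Dj P α c j) ^ (1/α - 1) ≤ ((b/m) ^ α) ^ (1/α - 1) :=
            rpow_le_rpow_of_nonpos (rpow_pos_of_pos hbm α) (hDlow j)
              (by rw [sub_nonpos, div_le_one hα0]; linarith)
        _ = (b/m) ^ (1-α) := e1
    have h2 : (P i j * c i) ^ (α - 1) * P i j ≤ B ^ α * c i ^ (α-1) := by
      have h3 : (P i j * c i) ^ (α - 1) ≤ (B * c i) ^ (α-1) :=
        rpow_le_rpow (mul_nonneg (hP i j).le (hpos i).le)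
          (mul_le_mul_of_nonneg_right (hPB i j) (hpos i).le) (by linarith)
      have h4 : (B * c i) ^ (α-1) = B ^ (α-1) * c i ^ (α-1) :=
        Real.mul_rpow hB.le (hpos i).le
      have h5 : B ^ (α-1) * B = B ^ α := by
        rw [← Real.rpow_add_one (ne_of_gt hB)]
        congr 1
        ring
      calc (P i j * c i) ^ (α - 1) * P i j ≤ (B * c i) ^ (α-1) * B :=
            mul_le_mul h3 (hPB i j) (hP i j).le
              (rpow_nonneg (mul_nonneg hB.le (hpos i).le) _)
        _ = B ^ α * c i ^ (α-1) := by rw [h4, mul_right_comm, h5]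
    have hnn1 : (0:ℝ) ≤ (P i j * c i) ^ (α - 1) * P i j :=
      mul_nonneg (rpow_nonneg (mul_nonneg (hP i j).le (hpos i).le) _) (hP i j).le
    exact mul_le_mul h1 h2 hnn1 (rpow_nonneg hbm.le _)
  have hup : Phi P α c ≤ n * ((b/m) ^ (1-α) * (B ^ α * c i ^ (α-1))) := by
    rw [← hcrit i, Gi]
    calc ∑ j, (Dj P α c j) ^ (1/α - 1) * ((P i j * c i) ^ (α - 1) * P i j)
        ≤ ∑ _j : Fin n, (b/m) ^ (1-α) * (B ^ α * c i ^ (α-1)) :=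
          Finset.sum_le_sum fun j _ => hterm j
      _ = n * ((b/m) ^ (1-α) * (B ^ α * c i ^ (α-1))) := by
          rw [Finset.sum_const, Finset.card_univ, Fintype.card_fin, nsmul_eq_mul]
  have hqa : q ^ α ≤ c i ^ (α - 1) := by
    have hfac : (0:ℝ) < n * ((b/m) ^ (1-α) * B ^ α) :=
      mul_pos hn' (mul_pos (rpow_pos_of_pos hbm _) (rpow_pos_of_pos hB _))
    have claim2 : b / m ≤ c i ^ (α-1) * (n * ((b/m) ^ (1-α) * B ^ α)) := by
      calc b / m ≤ Phi P α c := hPhiLow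
        _ ≤ n * ((b/m) ^ (1-α) * (B ^ α * c i ^ (α-1))) := hup
        _ = c i ^ (α-1) * (n * ((b/m) ^ (1-α) * B ^ α)) := by ring
    have claim1 : q ^ α * (n * ((b/m) ^ (1-α) * B ^ α)) ≤ b / m := by
      have hqeq : q = (b/m) / (B * n) := by
        rw [hq, div_div, ← mul_assoc]
      have hqrpow : q ^ α = (b/m) ^ α / (B * n) ^ α := by
        rw [hqeq, Real.div_rpow hbm.le (mul_nonneg hB.le hn'.le)]
      have hBn : (B * (n:ℝ)) ^ α = B ^ α * (n:ℝ) ^ α := Real.mul_rpow hB.le hn'.le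
      have hnα : (n:ℝ) ≤ (n:ℝ) ^ α := by
        calc (n:ℝ) = (n:ℝ) ^ (1:ℝ) := (Real.rpow_one _).symm
          _ ≤ (n:ℝ) ^ α := rpow_le_rpow_of_exponent_le
              (by exact_mod_cast hn) (le_of_lt hα)
      have hmm : (b/m) ^ α * (b/m) ^ (1-α) = b/m := by
        rw [← Real.rpow_add hbm]; norm_num
      have hBα : (0:ℝ) < B ^ α := rpow_pos_of_pos hB α
      have hnαp : (0:ℝ) < (n:ℝ) ^ α := rpow_pos_of_pos hn' α
      rw [hqrpow, hBn, div_mul_eq_mul_div, div_le_iff₀ (mul_pos hBα hnαp)]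
      calc (b/m) ^ α * ((n:ℝ) * ((b/m) ^ (1-α) * B ^ α))
          = ((b/m) ^ α * (b/m) ^ (1-α)) * B ^ α * n := by ring
        _ = (b/m) * B ^ α * n := by rw [hmm]
        _ ≤ (b/m) * B ^ α * (n:ℝ) ^ α :=
            mul_le_mul_of_nonneg_left hnα (by positivity)
        _ = b / m * (B ^ α * (n:ℝ) ^ α) := by ring
    exact le_of_mul_le_mul_right (le_trans claim1 claim2) hfac
  have heq : (q ^ (α / (α - 1))) ^ (α - 1) = q ^ α := by
    rw [← Real.rpow_mul hq0.le]
    congr 1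
    exact div_mul_cancel₀ α (by linarith : α - 1 ≠ 0)
  have hfin : (q ^ (α / (α - 1))) ^ (α - 1) ≤ c i ^ (α - 1) := by rw [heq]; exact hqa
  exact (rpow_le_rpow_iff (rpow_nonneg hq0.le _) (hpos i).le (by linarith)).1 hfin

lemma phi_mul_le_epLoad (hn : 0 < n) {P : Fin m → Fin n → ℝ} (hP : ∀ i j, 0 < P i j)
    {α : ℝ} (hα : 1 < α) {c : Fin m → ℝ} (hc : c ∈ stdSimplex ℝ (Fin m))
    (hpos : ∀ i, 0 < c i) (hcrit : ∀ i, Gi P α c i = Phi P α c) (i : Fin m) :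
    Phi P α c * (c i) ^ (1/α) ≤ epLoad P α (fun t => c t ^ α) i := by
  have hα0 : (0:ℝ) < α := lt_trans one_pos hα
  have hPhi : 0 < Phi P α c := Phi_pos hP hα0 hn hc
  have hD : ∀ j, 0 < Dj P α c j := Dj_pos hP hα0 hc
  have hPc : ∀ j, (0:ℝ) < P i j * c i := fun j => mul_pos (hP i j) (hpos i)
  set z : Fin n → ℝ := fun j => (P i j * c i) ^ α / Dj P α c j with hzdef
  set μ : Fin n → ℝ := fun j => (Dj P α c j) ^ (1/α) / Phi P α c with hμdef
  set p : ℝ := 1 + 1/α with hpdef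
  have hload : epLoad P α (fun t => c t ^ α) i = ∑ j, z j * P i j := by
    unfold epLoad epAlloc
    refine Finset.sum_congr rfl fun j _ => ?_
    have hnum : P i j ^ α * c i ^ α = (P i j * c i) ^ α :=
      (Real.mul_rpow (hP i j).le (hpos i).le).symm
    have hden : ∑ t, P t j ^ α * c t ^ α = Dj P α c j := by
      refine Finset.sum_congr rfl fun t _ => ?_
      exact (Real.mul_rpow (hP t j).le (hc.1 t)).symm
    rw [hnum, hden]
  have hμ0 : ∀ j ∈ Finset.univ, (0:ℝ) ≤ μ j := fun j _ =>
    div_nonneg (rpow_nonneg (hD j).le _) hPhi.le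
  have hμ1 : ∑ j, μ j = 1 := by
    rw [hμdef, ← Finset.sum_div]
    exact div_self hPhi.ne'
  have hz0 : ∀ j ∈ Finset.univ, (0:ℝ) ≤ z j := fun j _ =>
    div_nonneg (rpow_nonneg (hPc j).le _) (hD j).le
  have hp1 : (1:ℝ) ≤ p := by
    have h : 0 < 1/α := by positivity
    simp only [hpdef]; linarith
  have jensen := Real.rpow_arith_mean_le_arith_mean_rpow Finset.univ μ z hμ0 hμ1 hz0 hp1
  -- the mean equals c i
  have hkey : ∀ j, (Dj P α c j) ^ (1/α) * z j
      = c i * ((Dj P α c j) ^ (1/α - 1) * ((P i j * c i) ^ (α - 1) * P i j)) := by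
    intro j
    have e1 : (Dj P α c j) ^ (1/α - 1) = (Dj P α c j) ^ (1/α) / Dj P α c j := by
      rw [Real.rpow_sub (hD j), Real.rpow_one]
    have e2 : (P i j * c i) ^ (α - 1) * (P i j * c i) = (P i j * c i) ^ α := by
      rw [← Real.rpow_add_one (hPc j).ne']
      congr 1
      ring
    calc (Dj P α c j) ^ (1/α) * z j
        = (Dj P α c j) ^ (1/α) / Dj P α c j * ((P i j * c i) ^ (α-1) * (P i j * c i)) := by
          rw [e2]; simp only [hzdef]; ring
      _ = c i * ((Dj P α c j) ^ (1/α - 1) * ((P i j * c i) ^ (α - 1) * P i j)) := by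
          rw [e1]; ring
  have hmean : ∑ j, μ j * z j = c i := by
    have e0 : ∀ j, μ j * z j = (Dj P α c j) ^ (1/α) * z j / Phi P α c := fun j => by
      simp only [hμdef]; ring
    have : ∑ j, μ j * z j = (∑ j, (Dj P α c j) ^ (1/α) * z j) / Phi P α c := by
      rw [Finset.sum_congr rfl fun j _ => e0 j, ← Finset.sum_div]
    rw [this, Finset.sum_congr rfl fun j _ => hkey j, ← Finset.mul_sum]
    have hGi : ∑ j, (Dj P α c j) ^ (1/α - 1) * ((P i j * c i) ^ (α - 1) * P i j)
        = Gi P α c i := rfl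
    rw [hGi, hcrit i, mul_div_assoc, div_self hPhi.ne', mul_one]
  -- the p-th moment equals c i * load / Phi
  have hkey2 : ∀ j, (Dj P α c j) ^ (1/α) * z j ^ p = c i * (z j * P i j) := by
    intro j
    have e1 : z j ^ p = ((P i j * c i) ^ (α + 1)) / (Dj P α c j) ^ p := by
      rw [hzdef]
      simp only []
      rw [Real.div_rpow (rpow_nonneg (hPc j).le _) (hD j).le]
      congr 1
      rw [← Real.rpow_mul (hPc j).le]
      congr 1
      rw [hpdef]
      field_simp
    have e3 : (P i j * c i) ^ (α + 1) = (P i j * c i) ^ α * (P i j * c i) :=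
      Real.rpow_add_one (hPc j).ne' α
    have e5 : (Dj P α c j) ^ p = (Dj P α c j) ^ (1/α) * Dj P α c j := by
      rw [hpdef, add_comm]
      exact Real.rpow_add_one (hD j).ne' (1/α)
    rw [e1, e5, e3]
    simp only [hzdef]
    have hDne := (hD j).ne'
    have hDα := (rpow_pos_of_pos (hD j) (1/α)).ne'
    field_simp
  have hmom : ∑ j, μ j * z j ^ p = c i * epLoad P α (fun t => c t ^ α) i / Phi P α c := by
    have e0 : ∀ j, μ j * z j ^ p = (Dj P α c j) ^ (1/α) * z j ^ p / Phi P α c := fun j => by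
      simp only [hμdef]; ring
    rw [Finset.sum_congr rfl fun j _ => e0 j, ← Finset.sum_div,
      Finset.sum_congr rfl fun j _ => hkey2 j, ← Finset.mul_sum, ← hload]
  rw [hmean, hmom] at jensen
  have hcp : (c i) ^ p = c i * (c i) ^ (1/α) := by
    rw [hpdef, Real.rpow_add (hpos i), Real.rpow_one]
  rw [hcp] at jensen
  have h2 := mul_le_mul_of_nonneg_left jensen hPhi.le
  have h3 : Phi P α c * (c i * epLoad P α (fun t => c t ^ α) i / Phi P α c)
      = c i * epLoad P α (fun t => c t ^ α) i := by field_simp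
  rw [h3] at h2
  have h4 : c i * (Phi P α c * (c i) ^ (1/α)) ≤ c i * epLoad P α (fun t => c t ^ α) i := by
    calc c i * (Phi P α c * c i ^ (1/α)) = Phi P α c * (c i * c i ^ (1/α)) := by ring
      _ ≤ _ := h2
  exact le_of_mul_le_mul_left h4 (hpos i)

lemma snt_nonneg (hm : 0 < m) {P : Fin m → Fin n → ℝ} (hP : ∀ i j, 0 < P i j) :
    0 ≤ SNT P := by
  haveI : Nonempty (Fin m) := ⟨⟨0, hm⟩⟩
  have hbdd : BddAbove { t | ∃ X, Feasible X ∧ t = ⨅ i, loadX P X i } := by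
    refine ⟨∑ j, P ⟨0, hm⟩ j, ?_⟩
    rintro t ⟨X, hX, rfl⟩
    calc (⨅ i, loadX P X i) ≤ loadX P X ⟨0, hm⟩ := ciInf_le (Finite.bddBelow_range _) _
      _ ≤ ∑ j, P ⟨0, hm⟩ j := by
        refine Finset.sum_le_sum fun j _ => ?_
        calc X ⟨0, hm⟩ j * P ⟨0, hm⟩ j ≤ 1 * P ⟨0, hm⟩ j :=
              mul_le_mul_of_nonneg_right (hX.1 _ j).2 (hP _ j).le
          _ = P ⟨0, hm⟩ j := one_mul _
  have hmem : (⨅ i, loadX P (fun _ _ => (m:ℝ)⁻¹) i)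
      ∈ { t | ∃ X, Feasible X ∧ t = ⨅ i, loadX P X i } :=
    ⟨_, feasible_uniform hm, rfl⟩
  have h0 : 0 ≤ ⨅ i, loadX P (fun _ _ => (m:ℝ)⁻¹) i := by
    refine le_ciInf fun i => ?_
    refine Finset.sum_nonneg fun j _ => ?_
    have hm' : (0:ℝ) < m := by exact_mod_cast hm
    exact mul_nonneg (by positivity) (hP i j).le
  exact le_trans h0 (le_csSup hbdd hmem)

lemma snt_eq_zero_of_n_eq_zero (hm : 0 < m) {P : Fin m → Fin n → ℝ} (hn : n = 0) :
    SNT P ≤ 0 := by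
  haveI : Nonempty (Fin m) := ⟨⟨0, hm⟩⟩
  refine csSup_le (snt_set_nonempty hm P) ?_
  rintro t ⟨X, hX, rfl⟩
  have : ∀ i, loadX P X i = 0 := by
    intro i
    rw [loadX]
    subst hn
    simp
  simp [this]

end EPwork

open EPwork Real in
private theorem ep_main {m n : ℕ} (hm : 0 < m) (P : Fin m → Fin n → ℝ)
    (hP : ∀ i j, 0 < P i j) (ε : ℝ) (hε : 0 < ε) :
    ∃ (α : ℝ) (w : Fin m → ℝ), (∀ i, 0 < w i) ∧
      ∀ i, (1 - ε) * SNT P ≤ epLoad P α w i := by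
  by_cases htriv : (1 - ε) * SNT P ≤ 0
  · refine ⟨0, fun _ => 1, fun _ => one_pos, fun i => ?_⟩
    refine le_trans htriv ?_
    refine Finset.sum_nonneg fun j _ => ?_
    have h1 : (0:ℝ) ≤ P i j ^ (0:ℝ) * 1 := by
      rw [mul_one]; exact rpow_nonneg (hP i j).le 0
    have h2 : (0:ℝ) ≤ ∑ i', P i' j ^ (0:ℝ) * 1 :=
      Finset.sum_nonneg fun i' _ => by
        rw [mul_one]; exact rpow_nonneg (hP i' j).le 0
    exact mul_nonneg (div_nonneg h1 h2) (hP i j).le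
  push_neg at htriv
  have hT0 : 0 ≤ SNT P := snt_nonneg hm hP
  have hT : 0 < SNT P := by
    rcases lt_or_eq_of_le hT0 with h | h
    · exact h
    · rw [← h] at htriv; simp at htriv
  have h1ε : 0 < 1 - ε := by nlinarith
  have hε1 : 1 - ε < 1 := by linarith
  have hn : 0 < n := by
    rcases Nat.eq_zero_or_pos n with h | h
    · exact absurd (snt_eq_zero_of_n_eq_zero hm h) (not_le.2 hT)
    · exact h
  have hm' : (0:ℝ) < m := by exact_mod_cast hm
  have hn' : (0:ℝ) < n := by exact_mod_cast hn
  haveI : Nonempty (Fin m × Fin n) := ⟨⟨⟨0, hm⟩, ⟨0, hn⟩⟩⟩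
  -- entry bounds
  set b : ℝ := Finset.univ.inf' Finset.univ_nonempty (fun p : Fin m × Fin n => P p.1 p.2)
    with hbdef
  set B : ℝ := Finset.univ.sup' Finset.univ_nonempty (fun p : Fin m × Fin n => P p.1 p.2)
    with hBdef
  have hb : 0 < b := by
    rw [hbdef, Finset.lt_inf'_iff]
    exact fun p _ => hP p.1 p.2
  have hbP : ∀ i j, b ≤ P i j := fun i j =>
    Finset.inf'_le (f := fun p : Fin m × Fin n => P p.1 p.2)
      (Finset.mem_univ (⟨i, j⟩ : Fin m × Fin n))
  have hPB : ∀ i j, P i j ≤ B := fun i j =>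
    Finset.le_sup' (f := fun p : Fin m × Fin n => P p.1 p.2)
      (Finset.mem_univ (⟨i, j⟩ : Fin m × Fin n))
  have hB : 0 < B := lt_of_lt_of_le hb (le_trans (hbP ⟨0, hm⟩ ⟨0, hn⟩) (hPB _ _))
  set q : ℝ := b / (m * B * n) with hqdef
  have hq0 : 0 < q := div_pos hb (mul_pos (mul_pos hm' hB) hn')
  have hq1 : q ≤ 1 := by
    rw [hqdef, div_le_one (mul_pos (mul_pos hm' hB) hn')]
    have h1m : (1:ℝ) ≤ m := by exact_mod_cast hm
    have h1n : (1:ℝ) ≤ n := by exact_mod_cast hn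
    have hbB : b ≤ B := le_trans (hbP ⟨0, hm⟩ ⟨0, hn⟩) (hPB ⟨0, hm⟩ ⟨0, hn⟩)
    nlinarith [hbB, mul_nonneg (mul_nonneg (sub_nonneg.2 h1m) hB.le) (sub_nonneg.2 h1n),
      mul_nonneg (sub_nonneg.2 h1m) hB.le, mul_nonneg hB.le (sub_nonneg.2 h1n)]
  -- choose α
  set α : ℝ := max 2 (1 + Real.log q / Real.log (1 - ε)) with hαdef
  have hα : 1 < α := lt_of_lt_of_le one_lt_two (le_max_left _ _)
  have hα0 : (0:ℝ) < α := lt_trans one_pos hα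
  have hlogε : Real.log (1 - ε) < 0 := Real.log_neg h1ε hε1
  have hqε : 1 - ε ≤ q ^ (1/(α-1)) := by
    have hle : Real.log q / Real.log (1 - ε) ≤ α - 1 := by
      have := le_max_right 2 (1 + Real.log q / Real.log (1 - ε))
      rw [hαdef]; linarith
    have h2 : (α - 1) * Real.log (1 - ε) ≤ Real.log q :=
      (div_le_iff_of_neg hlogε).1 hle
    have h3 : Real.log (1 - ε) ≤ Real.log q / (α - 1) := by
      rw [le_div_iff₀ (by linarith : (0:ℝ) < α - 1)]
      linarith
    calc 1 - ε = Real.exp (Real.log (1 - ε)) := (Real.exp_log h1ε).symm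
      _ ≤ Real.exp (Real.log q * (1/(α-1))) := by
          rw [Real.exp_le_exp]
          rw [mul_one_div]
          exact h3
      _ = q ^ (1/(α-1)) := (Real.rpow_def_of_pos hq0 _).symm
  -- critical point
  obtain ⟨c, hcS, hpos, hcrit⟩ := exists_critical hm hn hP hα
  refine ⟨α, fun t => c t ^ α, fun t => rpow_pos_of_pos (hpos t) α, fun i => ?_⟩
  have hPhi : 0 < Phi P α c := Phi_pos hP hα0 hn hcS
  have hclow := coord_lower_bound hm hn hP hα hb hB hbP hPB hcS hpos hcrit i
  have hci : 1 - ε ≤ (c i) ^ (1/α) := by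
    have h4 : (q ^ (α/(α-1))) ^ (1/α) ≤ (c i) ^ (1/α) :=
      rpow_le_rpow (rpow_nonneg hq0.le _) hclow (by positivity)
    have h5 : (q ^ (α/(α-1))) ^ (1/α) = q ^ (1/(α-1)) := by
      rw [← Real.rpow_mul hq0.le]
      congr 1
      have hαne : α ≠ 0 := ne_of_gt hα0
      have hα1ne : α - 1 ≠ 0 := by intro h; rw [sub_eq_zero] at h; exact absurd h.symm (ne_of_lt hα)
      field_simp
    exact le_trans hqε (by rw [← h5]; exact h4)
  calc (1 - ε) * SNT P = SNT P * (1 - ε) := by ring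
    _ ≤ Phi P α c * (c i) ^ (1/α) :=
        mul_le_mul (snt_le_phi hm hP hα0 hcS) hci h1ε.le hPhi.le
    _ ≤ epLoad P α (fun t => c t ^ α) i := phi_mul_le_epLoad hn hP hα hcS hpos hcrit i



theorem stmt11 {m n : ℕ} (hm : 0 < m) (P : Fin m → Fin n → ℝ)
    (hP : ∀ i j, 0 < P i j) (ε : ℝ) (hε : 0 < ε) :
    ∃ (α : ℝ) (w : Fin m → ℝ), (∀ i, 0 < w i) ∧
      ∀ i, (1 - ε) * SNT P ≤ epLoad P α w i := by
  exact ep_main hm P hP ε hε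

-- #print axioms check
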